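/- Let A > 1 and m > n ≥ 1 be integers. Then P(A^m + 1) = P(A^n + 1) if and only if m = 3, n = 1, and A = 2. -/

import Mathlib

lemma nat_bezout (m n : ℕ) (hm : 0 < m) (hn : 0 < n) :
    ∃ u v : ℕ, m * u = n * v + Nat.gcd m n := by
  obtain ⟨a, b, hab⟩ : ∃ a b : ℤ, (Nat.gcd m n : ℤ) = m * a + n * b :=
    ⟨Nat.gcdA m n, Nat.gcdB m n, Nat.gcd_eq_gcd_ab m n⟩
  set t : ℤ := |a| + |b| with ht
  have hm1 : (1 : ℤ) ≤ m := by exact_mod_cast hm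
  have hn1 : (1 : ℤ) ≤ n := by exact_mod_cast hn
  have h1 : 0 ≤ a + n * t := by
    nlinarith [abs_nonneg a, abs_nonneg b, neg_abs_le a]
  have h2 : 0 ≤ m * t - b := by
    nlinarith [abs_nonneg a, abs_nonneg b, le_abs_self b]
  refine ⟨(a + n * t).toNat, (m * t - b).toNat, ?_⟩
  have e1 := Int.toNat_of_nonneg h1
  have e2 := Int.toNat_of_nonneg h2
  zify
  rw [e1, e2]
  linear_combination -hab



lemma pow_gcd_pm {R : Type*} [CommRing R] (x : R) {m n : ℕ} (hm : 0 < m) (hn : 0 < n)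
    (h1 : x ^ m = -1) (h2 : x ^ n = -1) :
    x ^ Nat.gcd m n = 1 ∨ x ^ Nat.gcd m n = -1 := by
  obtain ⟨u, v, huv⟩ := nat_bezout m n hm hn
  have e : ((-1 : R)) ^ u = (-1 : R) ^ v * x ^ Nat.gcd m n := by
    calc ((-1 : R)) ^ u = (x ^ m) ^ u := by rw [h1]
      _ = x ^ (m * u) := by rw [← pow_mul]
      _ = x ^ (n * v + Nat.gcd m n) := by rw [huv]
      _ = (x ^ n) ^ v * x ^ Nat.gcd m n := by rw [pow_add, pow_mul]
      _ = (-1 : R) ^ v * x ^ Nat.gcd m n := by rw [h2]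
  have hvv : ((-1 : R)) ^ v * (-1 : R) ^ v = 1 := by
    rw [← pow_add]; exact Even.neg_one_pow ⟨v, rfl⟩
  have e2 : x ^ Nat.gcd m n = (-1 : R) ^ (v + u) := by
    calc x ^ Nat.gcd m n = (((-1 : R)) ^ v * (-1 : R) ^ v) * x ^ Nat.gcd m n := by
          rw [hvv, one_mul]
      _ = (-1 : R) ^ v * ((-1 : R) ^ v * x ^ Nat.gcd m n) := by ring
      _ = (-1 : R) ^ v * (-1 : R) ^ u := by rw [← e]
      _ = (-1 : R) ^ (v + u) := by rw [pow_add]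
  rcases Nat.even_or_odd (v + u) with h | h
  · left; rw [e2, Even.neg_one_pow h]
  · right; rw [e2, Odd.neg_one_pow h]

lemma mod_lemma {w A m n : ℕ} (hw : 2 < w) (hm : 0 < m) (hn : 0 < n)
    (hdm : w ∣ A ^ m + 1) (hdn : w ∣ A ^ n + 1) :
    w ∣ A ^ Nat.gcd m n + 1 ∧ Odd (m / Nat.gcd m n) ∧ Odd (n / Nat.gcd m n) := by
  set g := Nat.gcd m n with hg
  have hgm : g ∣ m := Nat.gcd_dvd_left m n
  have hgn : g ∣ n := Nat.gcd_dvd_right m n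
  have hx : ∀ k : ℕ, w ∣ A ^ k + 1 → (A : ZMod w) ^ k = -1 := by
    intro k hk
    have : ((A ^ k + 1 : ℕ) : ZMod w) = 0 := by
      rw [ZMod.natCast_eq_zero_iff]; exact hk
    push_cast at this
    linear_combination this
  have hxm := hx m hdm
  have hxn := hx n hdn
  have hne : ((-1 : ZMod w)) ≠ 1 := by
    intro h
    have : ((2 : ℕ) : ZMod w) = 0 := by
      push_cast
      linear_combination -h
    rw [ZMod.natCast_eq_zero_iff] at this
    have := Nat.le_of_dvd (by norm_num) this
    omega
  have hgpow : (A : ZMod w) ^ g = -1 := by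
    rcases pow_gcd_pm (A : ZMod w) hm hn hxm hxn with h | h
    · exfalso
      apply hne
      rw [← hxm, ← Nat.mul_div_cancel' hgm, pow_mul, h, one_pow]
    · exact h
  refine ⟨?_, ?_, ?_⟩
  · have : ((A ^ g + 1 : ℕ) : ZMod w) = 0 := by
      push_cast
      rw [hgpow]; ring
    rwa [ZMod.natCast_eq_zero_iff] at this
  · rcases Nat.even_or_odd (m / g) with h | h
    · exfalso
      apply hne
      rw [← hxm, ← Nat.mul_div_cancel' hgm, pow_mul, hgpow, Even.neg_one_pow h]
    · exact h
  · rcases Nat.even_or_odd (n / g) with h | h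
    · exfalso
      apply hne
      rw [← hxn, ← Nat.mul_div_cancel' hgn, pow_mul, hgpow, Even.neg_one_pow h]
    · exact h


lemma two_adic (c : ℕ) (hc : Odd c) (k : ℕ)
    (h1 : 2 ^ k ∣ c + 1) (h2 : ¬ 2 ^ (k + 1) ∣ c + 1) :
    ∀ j : ℕ, 2 ^ k ∣ c ^ (2 * j + 1) + 1 ∧ ¬ 2 ^ (k + 1) ∣ c ^ (2 * j + 1) + 1 := by
  have hc1 : 1 ≤ c := hc.pos
  have hD : 2 ^ (k + 1) ∣ c ^ 2 - 1 := by
    have e : c ^ 2 - 1 = (c - 1) * (c + 1) := by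
      have : c ^ 2 = c * c := sq c
      cases' hc with r hr
      subst hr
      simp [this]
      ring_nf
      omega
    rw [e, pow_succ, mul_comm (2 ^ k) 2]
    exact mul_dvd_mul (by cases' hc with r hr; omega) h1
  intro j
  induction j with
  | zero => simpa using ⟨h1, h2⟩
  | succ i ih =>
    have e : c ^ (2 * (i + 1) + 1) + 1 = c ^ (2 * i + 1) * (c ^ 2 - 1) + (c ^ (2 * i + 1) + 1) := by
      have h21 : 1 ≤ c ^ 2 := Nat.one_le_pow _ _ (by omega)
      have : c ^ (2 * i + 1) * (c ^ 2 - 1) = c ^ (2 * (i + 1) + 1) - c ^ (2 * i + 1) := by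
        rw [Nat.mul_sub, mul_one, ← pow_add]
        ring_nf
      rw [this]
      have hle : c ^ (2 * i + 1) ≤ c ^ (2 * (i + 1) + 1) := Nat.pow_le_pow_right (by omega) (by omega)
      omega
    constructor
    · rw [e]
      exact dvd_add (Dvd.dvd.mul_left (dvd_trans (pow_dvd_pow 2 (Nat.le_succ k)) hD) _) ih.1
    · rw [e]
      intro hcon
      exact ih.2 ((Nat.dvd_add_right (Dvd.dvd.mul_left hD _)).mp hcon)

lemma v2_eq (c : ℕ) (hc : Odd c) {s : ℕ} (hs : Odd s) :
    (c ^ s + 1).factorization 2 = (c + 1).factorization 2 := by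
  set k := (c + 1).factorization 2 with hk
  have hc1 : 1 ≤ c := hc.pos
  have h1 : 2 ^ k ∣ c + 1 := Nat.ordProj_dvd _ _
  have h2 : ¬ 2 ^ (k + 1) ∣ c + 1 := Nat.pow_succ_factorization_not_dvd (by omega) Nat.prime_two
  obtain ⟨j, rfl⟩ := hs
  obtain ⟨d1, d2⟩ := two_adic c hc k h1 h2 j
  have hne : c ^ (2 * j + 1) + 1 ≠ 0 := by positivity
  have l1 : k ≤ (c ^ (2 * j + 1) + 1).factorization 2 :=
    (Nat.Prime.pow_dvd_iff_le_factorization Nat.prime_two hne).mp d1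
  have l2 : ¬ (k + 1 ≤ (c ^ (2 * j + 1) + 1).factorization 2) := fun h =>
    d2 ((Nat.Prime.pow_dvd_iff_le_factorization Nat.prime_two hne).mpr h)
  omega

lemma emult_eq_fact {p x : ℕ} (hp : p.Prime) (hx : x ≠ 0) :
    emultiplicity p x = ((x.factorization p : ℕ) : ℕ∞) := by
  have hfin : FiniteMultiplicity p x := Nat.finiteMultiplicity_iff.mpr ⟨hp.ne_one, Nat.pos_of_ne_zero hx⟩
  rw [hfin.emultiplicity_eq_multiplicity, Nat.multiplicity_eq_factorization hp hx]

lemma vq_eq {q : ℕ} (hq : q.Prime) (hq2 : q ≠ 2) {c s : ℕ} (hc : 0 < c)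
    (hqc : q ∣ c + 1) (hs : Odd s) :
    (c ^ s + 1).factorization q = (c + 1).factorization q + s.factorization q := by
  have hx : ¬ q ∣ c := by
    intro h
    exact hq.ne_one (Nat.dvd_one.mp (by simpa using Nat.dvd_sub hqc h))
  have hodd : Odd q := hq.odd_of_ne_two hq2
  have key := Nat.emultiplicity_pow_add_pow hq hodd (x := c) (y := 1) (by simpa using hqc) hx hs
  simp only [one_pow] at key
  have hs0 : s ≠ 0 := by rintro rfl; simp at hs
  rw [emult_eq_fact hq (by positivity), emult_eq_fact hq (by positivity),
    emult_eq_fact hq hs0] at key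
  exact_mod_cast key

lemma ineq {c s : ℕ} (hc : 2 ≤ c) (hs : 3 ≤ s) (h : c ^ s + 1 ≤ (c + 1) * s) :
    c = 2 ∧ s = 3 := by
  have big : ∀ t : ℕ, 4 ≤ t → ∀ d : ℕ, 2 ≤ d → (d + 1) * t < d ^ t := by
    intro t ht
    induction t with
    | zero => omega
    | succ i ih =>
      intro d hd
      rcases Nat.lt_or_ge i 4 with hi | hi
      · have hi4 : i = 3 := by omega
        subst hi4
        have h8 : 8 * d ≤ d ^ 4 := by
          calc 8 * d = 2 * (2 * (2 * d)) := by ring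
            _ ≤ d * (d * (d * d)) := by gcongr <;> omega
            _ = d ^ 4 := by ring
        have he : d ^ (3 + 1) = d ^ 4 := by norm_num
        omega
      · have hY := ih (by omega) d hd
        have h2 : 2 * d ^ i ≤ d * d ^ i := Nat.mul_le_mul_right _ hd
        calc (d + 1) * (i + 1) = (d + 1) * i + (d + 1) * 1 := by ring
          _ ≤ (d + 1) * i + (d + 1) * i := by
              have h3 : (d + 1) * 1 ≤ (d + 1) * i := Nat.mul_le_mul_left _ (by omega)
              omega
          _ < d ^ i + d ^ i := by omega
          _ = 2 * d ^ i := by ring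
          _ ≤ d * d ^ i := h2
          _ = d ^ (i + 1) := by ring
  rcases Nat.lt_or_ge s 4 with hs4 | hs4
  · have hs3 : s = 3 := by omega
    subst hs3
    refine ⟨?_, rfl⟩
    by_contra hcne
    have hc3 : 3 ≤ c := by omega
    have : c ^ 3 = c * c * c := by ring
    nlinarith
  · exact absurd h (by have := big s hs4 c hc; omega)

lemma dvd_key {c s : ℕ} (hc : 2 ≤ c) (hs : Odd s)
    (hprimes : ∀ q : ℕ, q.Prime → q ∣ c ^ s + 1 → q ∣ c + 1) :
    c ^ s + 1 ∣ (c + 1) * s := by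
  have hs0 : s ≠ 0 := by rintro rfl; simp at hs
  have h1 : c ^ s + 1 ≠ 0 := by positivity
  have h2 : (c + 1) * s ≠ 0 := by positivity
  rw [← Nat.factorization_le_iff_dvd h1 h2, Finsupp.le_def]
  intro q
  by_cases hq : q.Prime
  · by_cases hdq : q ∣ c ^ s + 1
    · have hqc1 := hprimes q hq hdq
      rw [Nat.factorization_mul (by omega) hs0, Finsupp.add_apply]
      by_cases hq2 : q = 2
      · subst hq2
        have hcodd : Odd c := by
          rcases hqc1 with ⟨r, hr⟩
          rw [Nat.odd_iff]
          omega
        rw [v2_eq c hcodd hs]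
        omega
      · rw [vq_eq hq hq2 (by omega) hqc1 hs]
    · simp [Nat.factorization_eq_zero_of_not_dvd hdq]
  · simp [Nat.factorization_eq_zero_of_not_prime _ hq]

lemma pow_two_of_only_two {x : ℕ} (hx : x ≠ 0) (hall : ∀ q, q.Prime → q ∣ x → q = 2) :
    x = 2 ^ x.factorization 2 := by
  have h := Nat.ordProj_mul_ordCompl_eq_self x 2
  by_cases h1 : ordCompl[2] x = 1
  · rw [h1, mul_one] at h
    exact h.symm
  · exfalso
    obtain ⟨q, hq, hqd⟩ := Nat.exists_prime_and_dvd h1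
    have hqx : q ∣ x := hqd.trans (Nat.ordCompl_dvd x 2)
    have hq2 := hall q hq hqx
    subst hq2
    exact (Nat.not_dvd_ordCompl Nat.prime_two hx) hqd

theorem stmt5 (A m n : ℕ) (hA : 1 < A) (hn : 1 ≤ n) (hmn : m > n) :
    (A ^ m + 1).primeFactors = (A ^ n + 1).primeFactors ↔
      m = 3 ∧ n = 1 ∧ A = 2 := by
  constructor
  · intro hP
    have hm : 0 < m := by omega
    have hn0 : 0 < n := hn
    have hAn2 : 2 ≤ A ^ n := le_trans hA (Nat.le_self_pow (by omega) A)
    have hAm2 : 2 ≤ A ^ m := le_trans hA (Nat.le_self_pow (by omega) A)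
    have hmn' : A ^ n < A ^ m := Nat.pow_lt_pow_right hA hmn
    set g := Nat.gcd m n with hg
    have hgm : g ∣ m := Nat.gcd_dvd_left m n
    have hgn : g ∣ n := Nat.gcd_dvd_right m n
    have hgpos : 0 < g := Nat.gcd_pos_of_pos_left _ hm
    obtain ⟨M, hmg⟩ : ∃ M, m = g * M := hgm
    obtain ⟨N, hng⟩ : ∃ N, n = g * N := hgn
    have hMdiv : m / g = M := by rw [hmg, Nat.mul_div_cancel_left _ hgpos]
    have hNdiv : n / g = N := by rw [hng, Nat.mul_div_cancel_left _ hgpos]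
    have hN1 : 1 ≤ N := by
      rcases Nat.eq_zero_or_pos N with h | h
      · rw [h, mul_zero] at hng; omega
      · exact h
    have hMN : N < M := by
      by_contra hcon
      push_neg at hcon
      have : m ≤ n := by
        rw [hmg, hng]
        exact Nat.mul_le_mul_left g hcon
      omega
    have hdvd_both : ∀ q : ℕ, q.Prime → (q ∣ A ^ m + 1 ↔ q ∣ A ^ n + 1) := by
      intro q hq
      constructor <;> intro hd
      · have hmem : q ∈ (A ^ m + 1).primeFactors :=
          Nat.mem_primeFactors.mpr ⟨hq, hd, by positivity⟩
        rw [hP] at hmem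
        exact (Nat.mem_primeFactors.mp hmem).2.1
      · have hmem : q ∈ (A ^ n + 1).primeFactors :=
          Nat.mem_primeFactors.mpr ⟨hq, hd, by positivity⟩
        rw [← hP] at hmem
        exact (Nat.mem_primeFactors.mp hmem).2.1
    by_cases hex : ∃ q : ℕ, q.Prime ∧ q ≠ 2 ∧ q ∣ A ^ n + 1
    · -- there is an odd prime divisor
      obtain ⟨p, hp, hp2, hpn⟩ := hex
      have hpm : p ∣ A ^ m + 1 := (hdvd_both p hp).mpr hpn
      have hp3 : 2 < p := by have := hp.two_le; omega
      obtain ⟨-, hModd, hNodd⟩ := mod_lemma hp3 hm hn0 hpm hpn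
      rw [← hg, hMdiv] at hModd
      rw [← hg, hNdiv] at hNodd
      have hc2 : 2 ≤ A ^ g := le_trans hA (Nat.le_self_pow (by omega) A)
      have hcm : (A ^ g) ^ M = A ^ m := by rw [← pow_mul, ← hmg]
      have hM3 : 3 ≤ M := by
        rcases hModd with ⟨r, hr⟩
        omega
      have hprimes : ∀ q, q.Prime → q ∣ (A ^ g) ^ M + 1 → q ∣ A ^ g + 1 := by
        intro q hq hqd
        rw [hcm] at hqd
        by_cases hq2 : q = 2
        · subst hq2
          have hA2 : ¬ 2 ∣ A := by
            intro h
            have h' : 2 ∣ A ^ m := dvd_pow h hm.ne'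
            have : (2 : ℕ) ∣ 1 := (Nat.dvd_add_right h').mp hqd
            simp at this
          have hc2' : ¬ 2 ∣ A ^ g := by
            intro h
            exact hA2 (Nat.Prime.dvd_of_dvd_pow Nat.prime_two h)
          omega
        · have hqn : q ∣ A ^ n + 1 := (hdvd_both q hq).mp hqd
          have hq3 : 2 < q := by have := hq.two_le; omega
          obtain ⟨hqg, -, -⟩ := mod_lemma hq3 hm hn0 hqd hqn
          exact hqg
      have hdd := dvd_key hc2 hModd hprimes
      have hle : (A ^ g) ^ M + 1 ≤ (A ^ g + 1) * M := Nat.le_of_dvd (by positivity) hdd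
      obtain ⟨hceq, hMeq⟩ := ineq hc2 hM3 hle
      have hAg : A = 2 ∧ g = 1 := by
        rcases Nat.lt_or_ge g 2 with h | h
        · have hg1 : g = 1 := by omega
          rw [hg1, pow_one] at hceq
          exact ⟨hceq, hg1⟩
        · exfalso
          have h4 : 2 ^ 2 ≤ A ^ g :=
            le_trans (Nat.pow_le_pow_left hA 2) (Nat.pow_le_pow_right (by omega) h)
          rw [hceq] at h4
          norm_num at h4
      have hm3 : m = 3 := by rw [hmg, hAg.2, hMeq, one_mul]
      have hn1 : n = 1 := by
        rcases hNodd with ⟨r, hr⟩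
        rw [hAg.2, one_mul] at hng
        omega
      exact ⟨hm3, hn1, hAg.1⟩
    · -- A^n+1 is a power of two
      exfalso
      push_neg at hex
      have hall : ∀ q : ℕ, q.Prime → q ∣ A ^ n + 1 → q = 2 := by
        intro q hq hd
        by_contra h
        exact hex q hq h hd
      set k := (A ^ n + 1).factorization 2 with hk
      have hpowk : A ^ n + 1 = 2 ^ k := pow_two_of_only_two (by positivity) hall
      set j := (A ^ m + 1).factorization 2 with hj
      have hpowj : A ^ m + 1 = 2 ^ j :=
        pow_two_of_only_two (by positivity)
          (fun q hq hd => hall q hq ((hdvd_both q hq).mp hd))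
      have hjk : k < j := by
        have h2 : (2 : ℕ) ^ k < 2 ^ j := by omega
        exact (Nat.pow_lt_pow_iff_right (by omega)).mp h2
      have hwm : A ^ n + 1 ∣ A ^ m + 1 := by
        rw [hpowk, hpowj]
        exact pow_dvd_pow 2 (by omega)
      obtain ⟨hwg, hModd, -⟩ := mod_lemma (by omega) hm hn0 hwm dvd_rfl
      rw [← hg] at hwg
      rw [← hg, hMdiv] at hModd
      have hgeqn : g = n := by
        have hgle : g ≤ n := Nat.le_of_dvd hn0 ⟨N, hng⟩
        have h1 : A ^ g ≤ A ^ n := Nat.pow_le_pow_right (by omega) hgle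
        have h2 : A ^ n + 1 ≤ A ^ g + 1 := Nat.le_of_dvd (by positivity) hwg
        have h3 : A ^ g = A ^ n := by omega
        exact Nat.pow_right_injective (by omega) h3
      have hAodd : Odd A := by
        have h2d : (2 : ℕ) ∣ A ^ n + 1 := by
          rw [hpowk]
          refine dvd_pow_self 2 ?_
          intro hk0
          rw [hk0, pow_zero] at hpowk
          omega
        rw [Nat.odd_iff]
        by_contra h
        have hA2 : 2 ∣ A := by omega
        have h' : 2 ∣ A ^ n := dvd_pow hA2 hn0.ne'
        have : (2 : ℕ) ∣ 1 := (Nat.dvd_add_right h').mp h2d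
        simp at this
      have hcodd : Odd (A ^ n) := hAodd.pow
      obtain ⟨r, hr⟩ := hModd
      have hcm : (A ^ n) ^ (2 * r + 1) = A ^ m := by
        rw [← pow_mul, hmg, hgeqn, hr]
      have h1 : 2 ^ k ∣ A ^ n + 1 := by rw [hpowk]
      have h2 : ¬ 2 ^ (k + 1) ∣ A ^ n + 1 := by
        rw [hpowk, Nat.pow_dvd_pow_iff_le_right (by omega)]
        omega
      obtain ⟨-, hnd⟩ := two_adic (A ^ n) hcodd k h1 h2 r
      rw [hcm, hpowj] at hnd
      exact hnd (pow_dvd_pow 2 (by omega))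
  · rintro ⟨rfl, rfl, rfl⟩
    have h9 : (2 : ℕ) ^ 3 + 1 = 3 ^ 2 := by norm_num
    have h3 : (2 : ℕ) ^ 1 + 1 = 3 ^ 1 := by norm_num
    rw [h9, h3, Nat.primeFactors_pow _ (by norm_num), Nat.primeFactors_pow _ (by norm_num)]
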